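/- Let $d_1, d_2$ be independent exponential random variables with rate $\lambda_v > 0$, and let $r$ be an independent random variable with density $2\lambda_b e^{-2\lambda_b x}$ on $[0, \infty)$, $\lambda_b > 0$. With $0 < h_v < h_b < h_s$, $r_s \ge 0$, $T_1 = \lambda_v h_v/h_b$, $\rho_b = T_1/\lambda_b$, define the association events $A_b = \{d_1 \ge r h_v/h_b\}$ (direct link LOS) and $A_s = \{d_1 < r h_v/h_b\} \cap \overline{E_s}$ (direct link blocked, RIS link LOS), where $E_s = \{d_2 < (r_s - r) h_v/h_s\}$ if $r \le r_s$ and $E_s = \{d_1 < (r - r_s) h_v/h_s\}$ if $r > r_s$. Then $\mathbb{P}(A_b) = \frac{2}{2 + \rho_b}$ and $\mathbb{P}(A_s) = \frac{\rho_b}{2 + \rho_b} - P_J(r_s)$, where $P_J(r_s) = \int_0^\infty J(x, r_s)\, 2\lambda_b e^{-2\lambda_b x}\, dx$ with $J(x, r_s) = (1 - e^{-T_1 x})(1 - e^{-T_2(r_s - x)})$ for $x \le r_s$ and $J(x, r_s) = 1 - e^{-T_2(x - r_s)}$ for $x > r_s$, $T_2 = \lambda_v h_v/h_s$. -/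

import Mathlib

set_option maxHeartbeats 1000000

open MeasureTheory ProbabilityTheory Real Set

namespace AssocAux

lemma expMeasure_eq (r : ℝ) : expMeasure r = volume.withDensity (exponentialPDF r) := rfl

lemma expMeasure_Iic {r : ℝ} (hr : 0 < r) (x : ℝ) :
    expMeasure r (Iic x) = ENNReal.ofReal (if 0 ≤ x then 1 - exp (-(r*x)) else 0) := by
  rw [expMeasure_eq, withDensity_apply _ measurableSet_Iic,
    lintegral_exponentialPDF_eq_antiDeriv hr]

lemma expMeasure_Iio {r : ℝ} (hr : 0 < r) (x : ℝ) :
    expMeasure r (Iio x) = ENNReal.ofReal (if 0 ≤ x then 1 - exp (-(r*x)) else 0) := by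
  rw [expMeasure_eq, withDensity_apply _ measurableSet_Iio,
    setLIntegral_congr Iio_ae_eq_Iic, ← withDensity_apply _ measurableSet_Iic,
    ← expMeasure_eq, expMeasure_Iic hr]

lemma expMeasure_Ici {r : ℝ} (hr : 0 < r) {x : ℝ} (hx : 0 ≤ x) :
    expMeasure r (Ici x) = ENNReal.ofReal (exp (-(r*x))) := by
  haveI := isProbabilityMeasure_expMeasure hr
  have h1 : exp (-(r*x)) ≤ 1 := exp_le_one_iff.mpr (by nlinarith)
  rw [← compl_Iio, measure_compl measurableSet_Iio (measure_ne_top _ _), measure_univ,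
    expMeasure_Iio hr, if_pos hx]
  refine ENNReal.sub_eq_of_eq_add ENNReal.ofReal_ne_top ?_
  rw [← ENNReal.ofReal_add (exp_pos _).le (by linarith)]
  norm_num

lemma expMeasure_Ico {r : ℝ} (hr : 0 < r) {c a : ℝ} (hc : 0 ≤ c) (hca : c ≤ a) :
    expMeasure r (Ico c a) = ENNReal.ofReal (exp (-(r*c)) - exp (-(r*a))) := by
  have hecl : exp (-(r*c)) ≤ 1 := exp_le_one_iff.mpr (by nlinarith)
  have h : Ico c a = Iio a \ Iio c := by ext y; simp only [mem_Ico, mem_diff, mem_Iio, not_lt]; exact and_comm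
  rw [h, measure_diff (Iio_subset_Iio hca) measurableSet_Iio.nullMeasurableSet
      (by rw [expMeasure_Iio hr]; exact ENNReal.ofReal_ne_top),
    expMeasure_Iio hr, expMeasure_Iio hr, if_pos (hc.trans hca), if_pos hc,
    ← ENNReal.ofReal_sub _ (by linarith)]
  ring_nf

lemma expMeasure_ae_pos {r : ℝ} (hr : 0 < r) : ∀ᵐ x ∂(expMeasure r), 0 < x := by
  rw [ae_iff]
  have h : {x : ℝ | ¬ 0 < x} = Iic 0 := by ext x; simp [not_lt]
  rw [h, expMeasure_Iic hr]
  simp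

lemma intOn_exp {a : ℝ} (ha : 0 < a) : IntegrableOn (fun x => exp (-(a*x))) (Ioi (0:ℝ)) := by
  simpa [neg_mul] using exp_neg_integrableOn_Ioi 0 ha

lemma int_exp {a : ℝ} (ha : 0 < a) : ∫ x in Ioi (0:ℝ), exp (-(a*x)) = 1/a := by
  have hd : ∀ x ∈ Ioi (0:ℝ), HasDerivAt (fun y => -exp (-(a*y))/a) (exp (-(a*x))) x := by
    intro x _
    have := (hasDerivAt_neg_exp_mul_exp (r := a) (x := x)).div_const a
    simpa [mul_div_assoc, mul_div_cancel_left₀ _ ha.ne'] using this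
  have hc : ContinuousWithinAt (fun y => -exp (-(a*y))/a) (Ici (0:ℝ)) 0 := by
    apply Continuous.continuousWithinAt
    continuity
  have h0 : Filter.Tendsto (fun y:ℝ => exp (-(a*y))) Filter.atTop (nhds 0) := by
    have h := tendsto_exp_atBot.comp
      (Filter.tendsto_id.const_mul_atTop_of_neg (neg_neg_iff_pos.2 ha))
    exact h.congr fun x => by simp [Function.comp, neg_mul]
  have ht : Filter.Tendsto (fun y => -exp (-(a*y))/a) Filter.atTop (nhds 0) := by
    have := (h0.neg).div_const a
    simpa using this
  have := integral_Ioi_of_hasDerivAt_of_tendsto hc hd (intOn_exp ha) ht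
  rw [this]
  simp [div_eq_mul_inv]

lemma lintegral_expMeasure {r : ℝ} (hr : 0 < r) {f : ℝ → ℝ} (hf : Measurable f)
    (hint : IntegrableOn (fun x => f x * (r * exp (-(r*x)))) (Ioi 0))
    (hnn : ∀ x ∈ Ioi (0:ℝ), 0 ≤ f x) :
    ∫⁻ x, ENNReal.ofReal (f x) ∂(expMeasure r)
      = ENNReal.ofReal (∫ x in Ioi (0:ℝ), f x * (r * exp (-(r*x)))) := by
  have hpdf : Measurable (exponentialPDF r) := by
    unfold exponentialPDF
    exact (measurable_exponentialPDFReal r).ennreal_ofReal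
  rw [expMeasure_eq, lintegral_withDensity_eq_lintegral_mul _ hpdf hf.ennreal_ofReal]
  simp only [Pi.mul_apply]
  rw [← lintegral_add_compl (fun x => exponentialPDF r x * ENNReal.ofReal (f x))
    measurableSet_Ioi (μ := volume)]
  have h2 : ∫⁻ x in (Ioi (0:ℝ))ᶜ, exponentialPDF r x * ENNReal.ofReal (f x) = 0 := by
    rw [compl_Ioi, setLIntegral_congr (Filter.EventuallyEq.symm Iio_ae_eq_Iic),
      setLIntegral_congr_fun measurableSet_Iio (fun x (hx : x < 0) => by
        rw [exponentialPDF_of_neg hx, zero_mul]), lintegral_zero]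
  rw [h2, add_zero]
  rw [setLIntegral_congr_fun measurableSet_Ioi (fun x (hx : 0 < x) => by
    rw [exponentialPDF_of_nonneg hx.le,
      ← ENNReal.ofReal_mul (by positivity), mul_comm (r * exp (-(r*x))) (f x)])]
  rw [ofReal_integral_eq_lintegral_ofReal hint ((ae_restrict_iff' measurableSet_Ioi).2
    (ae_of_all _ fun x hx => mul_nonneg (hnn x hx) (by positivity)))]

/-- The J function. -/
noncomputable def Jfun (T1 T2 rs x : ℝ) : ℝ :=
  if x ≤ rs then (1 - exp (-T1*x)) * (1 - exp (-T2*(rs-x))) else 1 - exp (-T2*(x-rs))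

lemma Jfun_measurable (T1 T2 rs : ℝ) : Measurable (Jfun T1 T2 rs) := by
  unfold Jfun
  exact Measurable.ite measurableSet_Iic (by fun_prop) (by fun_prop)

lemma Jfun_mem {T1 T2 rs : ℝ} (hT1 : 0 < T1) (hT2 : 0 < T2) {x : ℝ} (hx : 0 < x) :
    0 ≤ Jfun T1 T2 rs x ∧ Jfun T1 T2 rs x ≤ 1 := by
  unfold Jfun
  split_ifs with h
  · have f1 : exp (-T1*x) ≤ 1 := exp_le_one_iff.mpr (by nlinarith)
    have f2 : exp (-T2*(rs-x)) ≤ 1 := exp_le_one_iff.mpr (by nlinarith)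
    have f3 : (0:ℝ) < exp (-T1*x) := exp_pos _
    have f4 : (0:ℝ) < exp (-T2*(rs-x)) := exp_pos _
    constructor <;> nlinarith
  · have f2 : exp (-T2*(x-rs)) ≤ 1 := exp_le_one_iff.mpr (by nlinarith)
    have f4 : (0:ℝ) < exp (-T2*(x-rs)) := exp_pos _
    constructor <;> nlinarith

end AssocAux

open AssocAux

/-- **Association probabilities (Section III-B).**
With `(r, d₁, d₂)` independent — `r` exponential with rate `2·λb` (density
`2λb·e^{−2λb x}`), `d₁, d₂` exponential with rate `λv` — the probability of serving
via the direct link is `2/(2+ρb)` and via the RIS is `ρb/(2+ρb) − P_J(rs)`. -/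
theorem association_probabilities
    (lb lv hv hb hs rs : ℝ)
    (hlb : 0 < lb) (hlv : 0 < lv) (hhv : 0 < hv) (hvb : hv < hb) (hbs : hb < hs)
    (hrs : 0 ≤ rs)
    (T1 T2 ρb : ℝ) (hT1 : T1 = lv * hv / hb) (hT2 : T2 = lv * hv / hs)
    (hρb : ρb = T1 / lb)
    (μ : Measure (ℝ × ℝ × ℝ))
    (hμ : μ = (expMeasure (2 * lb)).prod ((expMeasure lv).prod (expMeasure lv)))
    (Ab Es As : Set (ℝ × ℝ × ℝ))
    (hAb : Ab = {ω : ℝ × ℝ × ℝ | ω.2.1 ≥ ω.1 * hv / hb})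
    (hEs : Es = {ω : ℝ × ℝ × ℝ |
      if ω.1 ≤ rs then ω.2.2 < (rs - ω.1) * hv / hs
      else ω.2.1 < (ω.1 - rs) * hv / hs})
    (hAs : As = {ω : ℝ × ℝ × ℝ | ω.2.1 < ω.1 * hv / hb} ∩ Esᶜ)
    (PJ : ℝ)
    (hPJ : PJ = ∫ x in Set.Ioi (0:ℝ),
      (if x ≤ rs then (1 - exp (-T1 * x)) * (1 - exp (-T2 * (rs - x)))
       else 1 - exp (-T2 * (x - rs))) * (2 * lb * exp (-2 * lb * x))) :
    μ Ab = ENNReal.ofReal (2 / (2 + ρb)) ∧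
      μ As = ENNReal.ofReal (ρb / (2 + ρb) - PJ) := by
  have hb0 : 0 < hb := hhv.trans hvb
  have hs0 : 0 < hs := hb0.trans hbs
  have hT1p : 0 < T1 := by rw [hT1]; positivity
  have hT2p : 0 < T2 := by rw [hT2]; positivity
  have hb0' : 0 < hb := hhv.trans hvb
  have hs0' : 0 < hs := hb0'.trans hbs
  have hT21 : T2 ≤ T1 := by
    rw [hT1, hT2, div_le_div_iff₀ hs0' hb0']
    nlinarith [mul_nonneg (mul_nonneg hlv.le hhv.le) (sub_nonneg.2 hbs.le)]
  have h2lb : 0 < 2*lb := by linarith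
  haveI iP1 : IsProbabilityMeasure (expMeasure (2*lb)) := isProbabilityMeasure_expMeasure h2lb
  haveI iP2 : IsProbabilityMeasure (expMeasure lv) := isProbabilityMeasure_expMeasure hlv
  -- measurability of the sets
  have mAb : MeasurableSet Ab := by
    rw [hAb]
    exact measurableSet_le ((measurable_fst.mul_const hv).div_const hb)
      (measurable_fst.comp measurable_snd)
  have mEs : MeasurableSet Es := by
    rw [hEs]
    have h : {ω : ℝ × ℝ × ℝ | if ω.1 ≤ rs then ω.2.2 < (rs - ω.1) * hv / hs
        else ω.2.1 < (ω.1 - rs) * hv / hs}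
        = ({ω : ℝ × ℝ × ℝ | ω.1 ≤ rs} ∩ {ω | ω.2.2 < (rs - ω.1) * hv / hs})
          ∪ ({ω : ℝ × ℝ × ℝ | ω.1 ≤ rs}ᶜ ∩ {ω | ω.2.1 < (ω.1 - rs) * hv / hs}) := by
      ext ω; by_cases h : ω.1 ≤ rs <;> simp [h]
    rw [h]
    exact ((measurableSet_le measurable_fst measurable_const).inter
        (measurableSet_lt (measurable_snd.comp measurable_snd)
          (((measurable_const.sub measurable_fst).mul_const hv).div_const hs))).union
      (((measurableSet_le measurable_fst measurable_const).compl).inter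
        (measurableSet_lt (measurable_fst.comp measurable_snd)
          (((measurable_fst.sub measurable_const).mul_const hv).div_const hs)))
  have mAs : MeasurableSet As := by
    rw [hAs]
    exact (measurableSet_lt (measurable_fst.comp measurable_snd)
      ((measurable_fst.mul_const hv).div_const hb)).inter mEs.compl
  -- slices
  have sliceAb : ∀ x : ℝ, 0 < x →
      ((expMeasure lv).prod (expMeasure lv)) (Prod.mk x ⁻¹' Ab)
        = ENNReal.ofReal (exp (-T1 * x)) := by
    intro x hx
    have hset : Prod.mk x ⁻¹' Ab = (Ici (x*hv/hb)) ×ˢ (univ : Set ℝ) := by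
      rw [hAb]; ext p; simp [Set.mem_prod, ge_iff_le]
    have ha : (0:ℝ) ≤ x*hv/hb := by positivity
    rw [hset, Measure.prod_prod, measure_univ, mul_one, expMeasure_Ici hlv ha,
      show -(lv*(x*hv/hb)) = -T1*x by rw [hT1]; ring]
  have sliceAs : ∀ x : ℝ, 0 < x →
      ((expMeasure lv).prod (expMeasure lv)) (Prod.mk x ⁻¹' As)
        = ENNReal.ofReal ((1 - exp (-T1*x)) - Jfun T1 T2 rs x) := by
    intro x hx
    have ha : (0:ℝ) ≤ x*hv/hb := by positivity
    have he1 : exp (-(lv*(x*hv/hb))) ≤ 1 :=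
      exp_le_one_iff.mpr (neg_nonpos.mpr (mul_nonneg hlv.le ha))
    by_cases hxr : x ≤ rs
    · have hset : Prod.mk x ⁻¹' As = (Iio (x*hv/hb)) ×ˢ (Ici ((rs - x)*hv/hs)) := by
        rw [hAs, hEs]; ext p
        simp only [mem_preimage, mem_inter_iff, mem_compl_iff, mem_setOf_eq, mem_prod,
          mem_Iio, mem_Ici, if_pos hxr, not_lt]
      have hc : (0:ℝ) ≤ (rs - x)*hv/hs := by
        apply div_nonneg _ hs0.le
        apply mul_nonneg (by linarith) hhv.le
      rw [hset, Measure.prod_prod, expMeasure_Iio hlv, if_pos ha, expMeasure_Ici hlv hc,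
        ← ENNReal.ofReal_mul (by linarith)]
      congr 1
      rw [show -(lv*(x*hv/hb)) = -T1*x by rw [hT1]; ring,
        show -(lv*((rs - x)*hv/hs)) = -T2*(rs-x) by rw [hT2]; ring]
      unfold Jfun
      rw [if_pos hxr]
      ring
    · have hc : (0:ℝ) ≤ (x - rs)*hv/hs := by
        apply div_nonneg _ hs0.le
        apply mul_nonneg (by push_neg at hxr; linarith) hhv.le
      have hca : (x - rs)*hv/hs ≤ x*hv/hb := by
        rw [div_le_div_iff₀ hs0 hb0]
        push_neg at hxr
        have h1 : (x - rs)*hv*hb ≤ x*hv*hb := by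
          nlinarith [mul_nonneg (mul_nonneg hrs hhv.le) hb0.le]
        have h2 : x*hv*hb ≤ x*hv*hs := by
          nlinarith [mul_nonneg (mul_nonneg hx.le hhv.le) (sub_nonneg.2 hbs.le)]
        linarith
      have hset : Prod.mk x ⁻¹' As = (Ico ((x - rs)*hv/hs) (x*hv/hb)) ×ˢ (univ : Set ℝ) := by
        rw [hAs, hEs]; ext p
        simp only [mem_preimage, mem_inter_iff, mem_compl_iff, mem_setOf_eq, mem_prod,
          mem_Ico, mem_univ, and_true, if_neg hxr, not_lt]
        exact and_comm
      rw [hset, Measure.prod_prod, measure_univ, mul_one, expMeasure_Ico hlv hc hca]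
      congr 1
      rw [show -(lv*((x - rs)*hv/hs)) = -T2*(x-rs) by rw [hT2]; ring,
        show -(lv*(x*hv/hb)) = -T1*x by rw [hT1]; ring]
      unfold Jfun
      rw [if_neg hxr]
      ring
  -- integrability facts
  have hint1 : IntegrableOn (fun x => exp (-T1*x) * (2*lb * exp (-(2*lb*x)))) (Ioi (0:ℝ)) := by
    have hfun : (fun x => exp (-T1*x) * (2*lb * exp (-(2*lb*x))))
        = fun x => 2*lb * exp (-((T1+2*lb)*x)) := by
      funext x
      rw [show -((T1+2*lb)*x) = -T1*x + -(2*lb*x) by ring, Real.exp_add]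
      ring
    rw [hfun]
    exact (intOn_exp (by positivity)).const_mul _
  have hint2 : IntegrableOn (fun x => (1 - exp (-T1*x)) * (2*lb * exp (-(2*lb*x)))) (Ioi (0:ℝ)) := by
    have hfun : (fun x => (1 - exp (-T1*x)) * (2*lb * exp (-(2*lb*x))))
        = fun x => 2*lb * exp (-(2*lb*x)) - 2*lb * exp (-((T1+2*lb)*x)) := by
      funext x
      rw [show -((T1+2*lb)*x) = -T1*x + -(2*lb*x) by ring, Real.exp_add]
      ring
    rw [hfun]
    exact ((intOn_exp h2lb).const_mul _).sub ((intOn_exp (by positivity)).const_mul _)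
  have hint3 : IntegrableOn (fun x => Jfun T1 T2 rs x * (2*lb * exp (-(2*lb*x)))) (Ioi (0:ℝ)) := by
    apply Integrable.mono' ((intOn_exp h2lb).const_mul (2*lb))
      (((Jfun_measurable T1 T2 rs).mul (by fun_prop)).aestronglyMeasurable)
    refine (ae_restrict_iff' measurableSet_Ioi).2 (ae_of_all _ fun x hx => ?_)
    obtain ⟨hJ0, hJ1⟩ := Jfun_mem hT1p hT2p hx
    have hp : (0:ℝ) < 2*lb * exp (-(2*lb*x)) := by positivity
    rw [Real.norm_eq_abs, Pi.mul_apply, abs_mul, abs_of_nonneg hJ0, abs_of_nonneg hp.le]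
    nlinarith
  -- part 1 : μ Ab
  have hI1 : ∫ x in Ioi (0:ℝ), exp (-T1*x) * (2*lb * exp (-(2*lb*x))) = 2*lb/(T1+2*lb) := by
    have hfun : (fun x => exp (-T1*x) * (2*lb * exp (-(2*lb*x))))
        = fun x => 2*lb * exp (-((T1+2*lb)*x)) := by
      funext x
      rw [show -((T1+2*lb)*x) = -T1*x + -(2*lb*x) by ring, Real.exp_add]
      ring
    rw [hfun, integral_const_mul, int_exp (by positivity)]
    ring
  have hAbval : μ Ab = ENNReal.ofReal (2*lb/(T1+2*lb)) := by
    have hcongr : (fun x => ((expMeasure lv).prod (expMeasure lv)) (Prod.mk x ⁻¹' Ab))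
        =ᵐ[expMeasure (2*lb)] fun x => ENNReal.ofReal (exp (-T1*x)) :=
      (expMeasure_ae_pos h2lb).mono fun x hx => sliceAb x hx
    rw [hμ, Measure.prod_apply mAb, lintegral_congr_ae hcongr,
      lintegral_expMeasure h2lb (by fun_prop) hint1 (fun x _ => (exp_pos _).le), hI1]
  -- part 2 : μ As
  have hI2 : ∫ x in Ioi (0:ℝ), (1 - exp (-T1*x)) * (2*lb * exp (-(2*lb*x)))
      = 1 - 2*lb/(T1+2*lb) := by
    have hfun : (fun x => (1 - exp (-T1*x)) * (2*lb * exp (-(2*lb*x))))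
        = fun x => 2*lb * exp (-(2*lb*x)) - 2*lb * exp (-((T1+2*lb)*x)) := by
      funext x
      rw [show -((T1+2*lb)*x) = -T1*x + -(2*lb*x) by ring, Real.exp_add]
      ring
    rw [hfun, integral_sub ((intOn_exp h2lb).const_mul _) ((intOn_exp (by positivity)).const_mul _),
      integral_const_mul, integral_const_mul, int_exp h2lb, int_exp (by positivity)]
    field_simp
  have hPJeq : ∫ x in Ioi (0:ℝ), Jfun T1 T2 rs x * (2*lb * exp (-(2*lb*x))) = PJ := by
    rw [hPJ]
    apply setIntegral_congr_fun measurableSet_Ioi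
    intro x _
    dsimp only
    unfold Jfun
    rw [show (-(2*lb*x) : ℝ) = -2*lb*x by ring]
  have hnnf : ∀ x ∈ Ioi (0:ℝ), 0 ≤ (1 - exp (-T1*x)) - Jfun T1 T2 rs x := by
    intro x hx
    have hx0 : 0 < x := hx
    unfold Jfun
    split_ifs with h
    · have f1 : exp (-T1*x) ≤ 1 := exp_le_one_iff.mpr
        (by rw [neg_mul]; exact neg_nonpos.mpr (mul_nonneg hT1p.le hx0.le))
      have f4 : (0:ℝ) < exp (-T2*(rs-x)) := exp_pos _
      have hrw : 1 - exp (-T1*x) - (1 - exp (-T1*x)) * (1 - exp (-T2*(rs-x)))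
          = (1 - exp (-T1*x)) * exp (-T2*(rs-x)) := by ring
      rw [hrw]
      exact mul_nonneg (by linarith) f4.le
    · push_neg at h
      have key : exp (-T1*x) ≤ exp (-T2*(x-rs)) := by
        apply exp_le_exp.mpr
        have k1 : T2*(x-rs) ≤ T1*(x-rs) := mul_le_mul_of_nonneg_right hT21 (by linarith)
        have k2 : T1*(x-rs) ≤ T1*x := by
          have := mul_nonneg hT1p.le hrs
          nlinarith
        linarith
      linarith
  have hintf : IntegrableOn
      (fun x => ((1 - exp (-T1*x)) - Jfun T1 T2 rs x) * (2*lb * exp (-(2*lb*x)))) (Ioi (0:ℝ)) := by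
    have hfun : (fun x => ((1 - exp (-T1*x)) - Jfun T1 T2 rs x) * (2*lb * exp (-(2*lb*x))))
        = fun x => (1 - exp (-T1*x)) * (2*lb * exp (-(2*lb*x)))
          - Jfun T1 T2 rs x * (2*lb * exp (-(2*lb*x))) := by
      funext x; ring
    rw [hfun]
    exact hint2.sub hint3
  have hAsval : μ As = ENNReal.ofReal ((1 - 2*lb/(T1+2*lb)) - PJ) := by
    have hcongr : (fun x => ((expMeasure lv).prod (expMeasure lv)) (Prod.mk x ⁻¹' As))
        =ᵐ[expMeasure (2*lb)] fun x => ENNReal.ofReal ((1 - exp (-T1*x)) - Jfun T1 T2 rs x) :=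
      (expMeasure_ae_pos h2lb).mono fun x hx => sliceAs x hx
    rw [hμ, Measure.prod_apply mAs, lintegral_congr_ae hcongr,
      lintegral_expMeasure (f := fun x => (1 - exp (-T1*x)) - Jfun T1 T2 rs x) h2lb ((by fun_prop : Measurable fun x => 1 - exp (-T1*x)).sub
        (Jfun_measurable T1 T2 rs)) hintf hnnf]
    congr 1
    have hsplit : ∫ x in Ioi (0:ℝ),
        ((1 - exp (-T1*x)) - Jfun T1 T2 rs x) * (2*lb * exp (-(2*lb*x)))
        = (∫ x in Ioi (0:ℝ), (1 - exp (-T1*x)) * (2*lb * exp (-(2*lb*x))))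
          - ∫ x in Ioi (0:ℝ), Jfun T1 T2 rs x * (2*lb * exp (-(2*lb*x))) := by
      rw [← integral_sub hint2 hint3]
      congr 1
      funext x
      ring
    rw [hsplit, hI2, hPJeq]
  -- final arithmetic
  have hden : (0:ℝ) < 2 + ρb := by rw [hρb]; positivity
  constructor
  · rw [hAbval]
    congr 1
    rw [hρb]
    field_simp
    ring
  · rw [hAsval]
    have h1 : T1 + 2*lb ≠ 0 := by positivity
    have h2 : (2:ℝ) + T1/lb ≠ 0 := by positivity
    have harith : 1 - 2*lb/(T1+2*lb) = ρb/(2+ρb) := by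
      rw [hρb]
      field_simp
      ring
    rw [harith]
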